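/- Let k be a field of characteristic 2 and let L be the 3-dimensional Lie algebra over k with basis {e, h, f} and brackets ⁅h,e⁆ = e, ⁅h,f⁆ = f, ⁅e,f⁆ = h. Then the second Lie algebra cohomology of L with trivial coefficients in k vanishes: for every alternating bilinear map φ : L × L → k satisfying the 2-cocycle identity φ(⁅a,b⁆,c) + φ(⁅b,c⁆,a) + φ(⁅c,a⁆,b) = 0 for all a, b, c ∈ L, there exists a k-linear map ψ : L → k such that φ(a,b) = ψ(⁅a,b⁆) for all a, b ∈ L. -/

import Mathlib

/-- The second Lie algebra cohomology of the 3-dimensional simple Lie algebra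
`𝔰` (basis `e = B 0`, `h = B 1`, `f = B 2`, brackets `⁅h,e⁆ = e`, `⁅h,f⁆ = f`, `⁅e,f⁆ = h`)
over a field of characteristic 2, with trivial coefficients, vanishes: every alternating
2-cocycle is a coboundary. -/
theorem stmt_4 (k : Type*) [Field k] [CharP k 2]
    (L : Type*) [LieRing L] [LieAlgebra k L]
    (B : Module.Basis (Fin 3) k L)
    (hhe : ⁅B 1, B 0⁆ = B 0) (hhf : ⁅B 1, B 2⁆ = B 2) (hef : ⁅B 0, B 2⁆ = B 1)
    (φ : L →ₗ[k] L →ₗ[k] k)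
    (halt : ∀ a : L, φ a a = 0)
    (hcoc : ∀ a b c : L, φ ⁅a, b⁆ c + φ ⁅b, c⁆ a + φ ⁅c, a⁆ b = 0) :
    ∃ ψ : L →ₗ[k] k, ∀ a b : L, φ a b = ψ ⁅a, b⁆ := by
  have negL : ∀ x : L, -x = x := by
    intro x
    rw [← neg_one_smul k x, show (-1 : k) = 1 from CharTwo.neg_eq 1, one_smul]
  have hsym : ∀ a b : L, φ a b = φ b a := by
    intro a b
    have h0 := halt (a + b)
    simp only [map_add, LinearMap.add_apply, halt] at h0
    have h1 : φ a b + φ b a = 0 := by linear_combination h0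
    have h2 : φ a b = -(φ b a) := eq_neg_of_add_eq_zero_left h1
    rw [h2, CharTwo.neg_eq]
  set ψ : L →ₗ[k] k := B.constr ℕ ![φ (B 1) (B 0), φ (B 0) (B 2), φ (B 1) (B 2)] with hψ
  refine ⟨ψ, ?_⟩
  -- the map (a,b) ↦ ψ ⁅a,b⁆ is bilinear
  set G : L →ₗ[k] L →ₗ[k] k := LinearMap.mk₂ k (fun a b => ψ ⁅a, b⁆)
    (fun a b c => by simp only [add_lie, map_add])
    (fun t a b => by simp only [smul_lie, map_smul])
    (fun a b c => by simp only [lie_add, map_add])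
    (fun t a b => by simp only [lie_smul, map_smul]) with hG
  have key : φ = G := by
    refine B.ext fun i => B.ext fun j => ?_
    have hψ0 : ψ (B 0) = φ (B 1) (B 0) := by simp [hψ, Module.Basis.constr_basis]
    have hψ1 : ψ (B 1) = φ (B 0) (B 2) := by simp [hψ, Module.Basis.constr_basis]
    have hψ2 : ψ (B 2) = φ (B 1) (B 2) := by simp [hψ, Module.Basis.constr_basis]
    have heh : ⁅B 0, B 1⁆ = B 0 := by rw [← lie_skew, hhe, negL]
    have hfh : ⁅B 2, B 1⁆ = B 2 := by rw [← lie_skew, hhf, negL]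
    have hfe : ⁅B 2, B 0⁆ = B 1 := by rw [← lie_skew, hef, negL]
    have hGij : ∀ i j : Fin 3, G (B i) (B j) = ψ ⁅B i, B j⁆ := fun _ _ => rfl
    fin_cases i <;> fin_cases j <;>
      simp only [Fin.zero_eta, Fin.mk_one, Fin.reduceFinMk, hGij, lie_self, heh, hfh, hfe, hhe, hhf, hef, map_zero,
        hψ0, hψ1, hψ2, halt] <;>
      first
        | rfl
        | exact hsym _ _
  intro a b
  rw [key]
  rfl
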